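/- arXiv:0906.1189 — 2 statements merged into one kernel-verified Lean document; each statement's English description precedes it below -/
import Mathlib

section
/- Let N ≥ 1, let s_1,…,s_N be positive reals, and let u_1 ≤ … ≤ u_N be nonnegative reals. Fix c > 0 and for σ > 0 with c·√σ < 1 set τ(σ) = c·√σ. Then the per-node CSMA throughput S(σ, τ(σ)) = p_s/(t̄_s + t̄_c + t̄_i) tends to 1/(s_1 + … + s_N) as σ → 0⁺. -/
open Finset Filter Topology

/-- For `N ≥ 1`, positive travel times `s_1,…,s_N`, nondecreasing nonnegative
packet durations `u_1 ≤ … ≤ u_N`, and `τ(σ) = c·√σ` with `c > 0`, the per-node CSMA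
throughput `S(σ, τ(σ)) = p_s/(t̄_s + t̄_c + t̄_i)` tends to `1/(s_1 + … + s_N)` as `σ → 0⁺`. -/
theorem csma_throughput_limit_sqrt
    (N : ℕ) (hN : 1 ≤ N) (s u : ℕ → ℝ)
    (hs : ∀ k ∈ Finset.Icc 1 N, 0 < s k)
    (hu0 : ∀ k ∈ Finset.Icc 1 N, 0 ≤ u k)
    (humono : ∀ k l, 1 ≤ k → k ≤ l → l ≤ N → u k ≤ u l)
    (c : ℝ) (hc : 0 < c) :
    Tendsto
      (fun σ : ℝ =>
        (fun τ : ℝ =>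
          (τ * (1 - τ) ^ (N - 1)) /
            ((∑ k ∈ Finset.Icc 1 N, (τ * (1 - τ) ^ (N - 1)) * (s k + σ)) +
             (∑ k ∈ Finset.Icc 2 N, τ * (1 - τ) ^ (N - k) *
                ∑ l ∈ Finset.Icc 1 (k - 1),
                  ((k - 1).choose l : ℝ) * τ ^ l * (1 - τ) ^ (k - 1 - l) * (u k + σ)) +
             (1 - τ) ^ N * σ)) (c * Real.sqrt σ))
      (𝓝[>] (0 : ℝ)) (𝓝 (1 / ∑ k ∈ Finset.Icc 1 N, s k)) := by
  set T : ℝ := ∑ k ∈ Finset.Icc 1 N, s k with hT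
  have hTpos : 0 < T := Finset.sum_pos hs ⟨1, by simp [hN]⟩
  -- auxiliary continuous function
  set h : ℝ → ℝ := fun x =>
    (∑ k ∈ Finset.Icc 1 N, (s k + x ^ 2 / c ^ 2)) +
    (∑ k ∈ Finset.Icc 2 N, ∑ l ∈ Finset.Icc 1 (k - 1),
      ((k - 1).choose l : ℝ) * (x / (1 - x)) ^ l * (u k + x ^ 2 / c ^ 2)) +
    (1 - x) * x / c ^ 2 with hh
  have hx0 : Tendsto (fun σ : ℝ => c * Real.sqrt σ) (𝓝[>] (0:ℝ)) (𝓝 0) := by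
    have : Tendsto (fun σ : ℝ => c * Real.sqrt σ) (𝓝 0) (𝓝 (c * Real.sqrt 0)) :=
      (Real.continuous_sqrt.continuousAt.const_mul c)
    simpa using this.mono_left nhdsWithin_le_nhds
  have hcont : Tendsto h (𝓝 0) (𝓝 T) := by
    have hdiv : Tendsto (fun x : ℝ => x / (1 - x)) (𝓝 0) (𝓝 0) := by
      have : ContinuousAt (fun x : ℝ => x / (1 - x)) 0 := (continuousAt_id.div (continuousAt_const.sub continuousAt_id)
        (by norm_num : (1:ℝ) - 0 ≠ 0))
      simpa using this.tendsto
    have hsq : Tendsto (fun x : ℝ => x ^ 2 / c ^ 2) (𝓝 0) (𝓝 0) := by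
      have : Tendsto (fun x : ℝ => x ^ 2 / c ^ 2) (𝓝 0) (𝓝 (0 ^ 2 / c ^ 2)) :=
        ((continuousAt_id.pow 2).div_const _)
      simpa using this
    have hA : Tendsto (fun x : ℝ => ∑ k ∈ Finset.Icc 1 N, (s k + x ^ 2 / c ^ 2))
        (𝓝 (0:ℝ)) (𝓝 T) := by
      have := tendsto_finset_sum (f := fun k (x : ℝ) => s k + x ^ 2 / c ^ 2)
        (a := fun k => s k) (Finset.Icc 1 N)
        (fun k _ => by simpa using (tendsto_const_nhds.add hsq))
      simpa using this
    have hterm : ∀ (k l : ℕ), 1 ≤ l → Tendsto (fun x : ℝ =>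
        ((k - 1).choose l : ℝ) * (x / (1 - x)) ^ l * (u k + x ^ 2 / c ^ 2))
        (𝓝 (0:ℝ)) (𝓝 0) := by
      intro k l hl
      have hdl : Tendsto (fun x : ℝ => (x / (1 - x)) ^ l) (𝓝 (0:ℝ)) (𝓝 0) := by
        have := hdiv.pow l
        simpa [zero_pow (by omega : l ≠ 0)] using this
      have := ((tendsto_const_nhds (x := (((k - 1).choose l : ℝ)))).mul hdl).mul
        ((tendsto_const_nhds (x := u k)).add hsq)
      simpa using this
    have hB : Tendsto (fun x : ℝ => ∑ k ∈ Finset.Icc 2 N, ∑ l ∈ Finset.Icc 1 (k - 1),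
        ((k - 1).choose l : ℝ) * (x / (1 - x)) ^ l * (u k + x ^ 2 / c ^ 2))
        (𝓝 (0:ℝ)) (𝓝 0) := by
      have : Tendsto (fun x : ℝ => ∑ k ∈ Finset.Icc 2 N, ∑ l ∈ Finset.Icc 1 (k - 1),
          ((k - 1).choose l : ℝ) * (x / (1 - x)) ^ l * (u k + x ^ 2 / c ^ 2))
          (𝓝 (0:ℝ)) (𝓝 (∑ k ∈ Finset.Icc 2 N, (0:ℝ))) := by
        refine tendsto_finset_sum _ (fun k _ => ?_)
        have : Tendsto (fun x : ℝ => ∑ l ∈ Finset.Icc 1 (k - 1),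
            ((k - 1).choose l : ℝ) * (x / (1 - x)) ^ l * (u k + x ^ 2 / c ^ 2))
            (𝓝 (0:ℝ)) (𝓝 (∑ l ∈ Finset.Icc 1 (k - 1), (0:ℝ))) :=
          tendsto_finset_sum _ (fun l hl => hterm k l (Finset.mem_Icc.mp hl).1)
        simpa using this
      simpa using this
    have hI : Tendsto (fun x : ℝ => (1 - x) * x / c ^ 2) (𝓝 (0:ℝ)) (𝓝 0) := by
      have : Tendsto (fun x : ℝ => (1 - x) * x / c ^ 2) (𝓝 0)
          (𝓝 ((1 - 0) * 0 / c ^ 2)) :=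
        (((continuousAt_const.sub continuousAt_id).mul continuousAt_id).div_const _)
      simpa using this
    have := (hA.add hB).add hI
    simpa using this
  have hcomp : Tendsto (fun σ : ℝ => h (c * Real.sqrt σ)) (𝓝[>] (0:ℝ)) (𝓝 T) :=
    hcont.comp hx0
  have hinv : Tendsto (fun σ : ℝ => (h (c * Real.sqrt σ))⁻¹) (𝓝[>] (0:ℝ)) (𝓝 (1 / T)) := by
    rw [one_div]
    exact hcomp.inv₀ hTpos.ne'
  refine Tendsto.congr' ?_ hinv
  have hmem : Set.Ioo (0:ℝ) (c⁻¹ ^ 2) ∈ 𝓝[>] (0:ℝ) :=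
    Ioo_mem_nhdsGT_of_mem ⟨le_refl 0, by positivity⟩
  filter_upwards [hmem] with σ hσ
  obtain ⟨hσ0, hσ2⟩ := hσ
  set x := c * Real.sqrt σ with hxdef
  have hx0' : 0 < x := mul_pos hc (Real.sqrt_pos.2 hσ0)
  have hx1 : x < 1 := by
    have h1 : Real.sqrt σ < Real.sqrt (c⁻¹ ^ 2) := Real.sqrt_lt_sqrt hσ0.le hσ2
    have h2 : Real.sqrt (c⁻¹ ^ 2) = c⁻¹ := Real.sqrt_sq (by positivity)
    rw [h2] at h1
    calc x < c * c⁻¹ := by exact (mul_lt_mul_iff_right₀ hc).mpr h1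
    _ = 1 := mul_inv_cancel₀ hc.ne'
  have h1x : 0 < 1 - x := by linarith
  have hσeq : x ^ 2 / c ^ 2 = σ := by
    rw [hxdef, mul_pow, Real.sq_sqrt hσ0.le]
    field_simp
  have hp : 0 < x * (1 - x) ^ (N - 1) := mul_pos hx0' (pow_pos h1x _)
  have eN : (1 - x) ^ N = (1 - x) * (1 - x) ^ (N - 1) := by
    rw [← pow_succ']
    congr 1
    omega
  have key : h x * (x * (1 - x) ^ (N - 1)) =
      ((∑ k ∈ Finset.Icc 1 N, (x * (1 - x) ^ (N - 1)) * (s k + σ)) +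
       (∑ k ∈ Finset.Icc 2 N, x * (1 - x) ^ (N - k) *
          ∑ l ∈ Finset.Icc 1 (k - 1),
            ((k - 1).choose l : ℝ) * x ^ l * (1 - x) ^ (k - 1 - l) * (u k + σ)) +
       (1 - x) ^ N * σ) := by
    simp only [hh]
    rw [add_mul, add_mul, Finset.sum_mul, Finset.sum_mul, hσeq]
    congr 1
    congr 1
    · exact Finset.sum_congr rfl fun k _ => mul_comm _ _
    · refine Finset.sum_congr rfl fun k hk => ?_
      rw [Finset.sum_mul, Finset.mul_sum]
      refine Finset.sum_congr rfl fun l hl => ?_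
      obtain ⟨hk2, hkN⟩ := Finset.mem_Icc.mp hk
      obtain ⟨hl1, hlk⟩ := Finset.mem_Icc.mp hl
      have e : (1 - x) ^ (N - 1) = (1 - x) ^ (k - 1 - l) * ((1 - x) ^ (N - k) * (1 - x) ^ l) := by
        rw [← pow_add, ← pow_add]
        congr 1
        omega
      have hne : ((1:ℝ) - x) ^ l ≠ 0 := pow_ne_zero _ (by linarith)
      rw [div_pow, e]
      field_simp
    · rw [eN, ← hσeq]
      ring
  rw [← key]
  rcases eq_or_ne (h x) 0 with h0 | h0
  · simp [h0]
  · field_simp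
end

section
/- Let N ≥ 1, let s_1,…,s_N be positive reals, and let u_1 ≤ … ≤ u_N be nonnegative reals. Let τ : (0,∞) → (0,1) be any function such that τ(σ) → 0 and σ/τ(σ) → 0 as σ → 0⁺. Then the per-node CSMA throughput S(σ, τ(σ)) = p_s/(t̄_s + t̄_c + t̄_i) tends to 1/(s_1 + … + s_N) as σ → 0⁺. -/
open Finset Filter Topology

/-- For `N ≥ 1`, positive travel times `s_k`, nondecreasing nonnegative packet
durations `u_k`, and any `τ : (0,∞) → (0,1)` with `τ(σ) → 0` and `σ/τ(σ) → 0` as `σ → 0⁺`,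
the per-node CSMA throughput `S(σ, τ(σ))` tends to `1/(s_1 + … + s_N)` as `σ → 0⁺`. -/
theorem csma_throughput_limit_general
    (N : ℕ) (hN : 1 ≤ N) (s u : ℕ → ℝ)
    (hs : ∀ k ∈ Finset.Icc 1 N, 0 < s k)
    (hu0 : ∀ k ∈ Finset.Icc 1 N, 0 ≤ u k)
    (humono : ∀ k l, 1 ≤ k → k ≤ l → l ≤ N → u k ≤ u l)
    (τ : ℝ → ℝ)
    (hτmem : ∀ σ : ℝ, 0 < σ → τ σ ∈ Set.Ioo (0 : ℝ) 1)
    (hτ0 : Tendsto τ (𝓝[>] (0 : ℝ)) (𝓝 0))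
    (hστ : Tendsto (fun σ : ℝ => σ / τ σ) (𝓝[>] (0 : ℝ)) (𝓝 0)) :
    Tendsto
      (fun σ : ℝ =>
        (τ σ * (1 - τ σ) ^ (N - 1)) /
          ((∑ k ∈ Finset.Icc 1 N, (τ σ * (1 - τ σ) ^ (N - 1)) * (s k + σ)) +
           (∑ k ∈ Finset.Icc 2 N, τ σ * (1 - τ σ) ^ (N - k) *
              ∑ l ∈ Finset.Icc 1 (k - 1),
                ((k - 1).choose l : ℝ) * (τ σ) ^ l * (1 - τ σ) ^ (k - 1 - l) * (u k + σ)) +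
           (1 - τ σ) ^ N * σ))
      (𝓝[>] (0 : ℝ)) (𝓝 (1 / ∑ k ∈ Finset.Icc 1 N, s k)) := by
  have hne : (Finset.Icc 1 N).Nonempty := ⟨1, by simp [hN]⟩
  have hsum_pos : 0 < ∑ k ∈ Finset.Icc 1 N, s k := Finset.sum_pos hs hne
  -- the "denominator over numerator" function
  set G : ℝ → ℝ := fun σ =>
    (∑ k ∈ Finset.Icc 1 N, (s k + σ)) +
    (∑ k ∈ Finset.Icc 2 N,
        (∑ l ∈ Finset.Icc 1 (k - 1),
          ((k - 1).choose l : ℝ) * (τ σ) ^ l * (1 - τ σ) ^ (k - 1 - l) * (u k + σ)) /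
        (1 - τ σ) ^ (k - 1)) +
    (1 - τ σ) * (σ / τ σ) with hGdef
  have hσ0 : Tendsto (fun σ : ℝ => σ) (𝓝[>] (0 : ℝ)) (𝓝 0) :=
    tendsto_id.mono_left nhdsWithin_le_nhds
  -- limits of the three pieces
  have h1 : Tendsto (fun σ : ℝ => ∑ k ∈ Finset.Icc 1 N, (s k + σ)) (𝓝[>] (0 : ℝ))
      (𝓝 (∑ k ∈ Finset.Icc 1 N, s k)) := by
    have := tendsto_finset_sum (Finset.Icc 1 N)
      (fun k _ => (tendsto_const_nhds (α := ℝ) (x := s k)).add hσ0)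
    simpa using this
  have h2 : Tendsto (fun σ : ℝ => ∑ k ∈ Finset.Icc 2 N,
      (∑ l ∈ Finset.Icc 1 (k - 1),
        ((k - 1).choose l : ℝ) * (τ σ) ^ l * (1 - τ σ) ^ (k - 1 - l) * (u k + σ)) /
      (1 - τ σ) ^ (k - 1)) (𝓝[>] (0 : ℝ)) (𝓝 0) := by
    have hterm : ∀ k ∈ Finset.Icc 2 N, Tendsto (fun σ : ℝ =>
        (∑ l ∈ Finset.Icc 1 (k - 1),
          ((k - 1).choose l : ℝ) * (τ σ) ^ l * (1 - τ σ) ^ (k - 1 - l) * (u k + σ)) /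
        (1 - τ σ) ^ (k - 1)) (𝓝[>] (0 : ℝ)) (𝓝 0) := by
      intro k hk
      have hnum : Tendsto (fun σ : ℝ => ∑ l ∈ Finset.Icc 1 (k - 1),
          ((k - 1).choose l : ℝ) * (τ σ) ^ l * (1 - τ σ) ^ (k - 1 - l) * (u k + σ))
          (𝓝[>] (0 : ℝ)) (𝓝 0) := by
        have : ∀ l ∈ Finset.Icc 1 (k - 1), Tendsto (fun σ : ℝ =>
            ((k - 1).choose l : ℝ) * (τ σ) ^ l * (1 - τ σ) ^ (k - 1 - l) * (u k + σ))
            (𝓝[>] (0 : ℝ)) (𝓝 0) := by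
          intro l hl
          have hl1 : 1 ≤ l := (Finset.mem_Icc.mp hl).1
          have := ((tendsto_const_nhds (x := ((k - 1).choose l : ℝ)).mul
            (hτ0.pow l)).mul ((tendsto_const_nhds (x := (1:ℝ)).sub hτ0).pow (k - 1 - l))).mul
            ((tendsto_const_nhds (x := u k)).add hσ0)
          have h0 : (0:ℝ) ^ l = 0 := zero_pow (by omega)
          simpa [h0] using this
        have := tendsto_finset_sum (Finset.Icc 1 (k - 1)) this
        simpa using this
      have hden : Tendsto (fun σ : ℝ => (1 - τ σ) ^ (k - 1)) (𝓝[>] (0 : ℝ))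
          (𝓝 ((1 - 0 : ℝ) ^ (k - 1))) :=
        ((tendsto_const_nhds (x := (1:ℝ))).sub hτ0).pow (k - 1)
      have := hnum.div hden (by norm_num)
      simpa [Pi.div_def] using this
    have := tendsto_finset_sum (Finset.Icc 2 N) hterm
    simpa using this
  have h3 : Tendsto (fun σ : ℝ => (1 - τ σ) * (σ / τ σ)) (𝓝[>] (0 : ℝ)) (𝓝 0) := by
    have := ((tendsto_const_nhds (x := (1:ℝ))).sub hτ0).mul hστ
    simpa using this
  have hG : Tendsto G (𝓝[>] (0 : ℝ)) (𝓝 (∑ k ∈ Finset.Icc 1 N, s k)) := by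
    have := (h1.add h2).add h3
    simpa [hGdef] using this
  have hGinv : Tendsto (fun σ => (G σ)⁻¹) (𝓝[>] (0 : ℝ))
      (𝓝 ((∑ k ∈ Finset.Icc 1 N, s k)⁻¹)) := hG.inv₀ hsum_pos.ne'
  -- eventual equality of the throughput with (G σ)⁻¹
  have heq : ∀ᶠ σ in 𝓝[>] (0 : ℝ),
      (τ σ * (1 - τ σ) ^ (N - 1)) /
        ((∑ k ∈ Finset.Icc 1 N, (τ σ * (1 - τ σ) ^ (N - 1)) * (s k + σ)) +
         (∑ k ∈ Finset.Icc 2 N, τ σ * (1 - τ σ) ^ (N - k) *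
            ∑ l ∈ Finset.Icc 1 (k - 1),
              ((k - 1).choose l : ℝ) * (τ σ) ^ l * (1 - τ σ) ^ (k - 1 - l) * (u k + σ)) +
         (1 - τ σ) ^ N * σ) = (G σ)⁻¹ := by
    filter_upwards [self_mem_nhdsWithin] with σ hσ
    have hτpos : 0 < τ σ := (hτmem σ hσ).1
    have hτlt : τ σ < 1 := (hτmem σ hσ).2
    have hτne : τ σ ≠ 0 := ne_of_gt hτpos
    have h1ne : (1 - τ σ) ≠ 0 := by intro h; linarith [sub_eq_zero.mp h]
    have hAne : τ σ * (1 - τ σ) ^ (N - 1) ≠ 0 := mul_ne_zero hτne (pow_ne_zero _ h1ne)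
    have hBeq :
        ((∑ k ∈ Finset.Icc 1 N, (τ σ * (1 - τ σ) ^ (N - 1)) * (s k + σ)) +
         (∑ k ∈ Finset.Icc 2 N, τ σ * (1 - τ σ) ^ (N - k) *
            ∑ l ∈ Finset.Icc 1 (k - 1),
              ((k - 1).choose l : ℝ) * (τ σ) ^ l * (1 - τ σ) ^ (k - 1 - l) * (u k + σ)) +
         (1 - τ σ) ^ N * σ) = (τ σ * (1 - τ σ) ^ (N - 1)) * G σ := by
      rw [hGdef]
      simp only
      rw [mul_add, mul_add]
      congr 1
      · congr 1
        · rw [mul_sum]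
        · rw [mul_sum]
          refine Finset.sum_congr rfl (fun k hk => ?_)
          obtain ⟨hk2, hkN⟩ := Finset.mem_Icc.mp hk
          have hsplit : N - 1 = (N - k) + (k - 1) := by omega
          rw [hsplit, pow_add]
          field_simp
          ring_nf
          exact Finset.sum_congr rfl (fun l _ => by ring)
      · have hpow : (1 - τ σ) ^ N = (1 - τ σ) ^ (N - 1) * (1 - τ σ) := by
          rw [← pow_succ]
          congr 1
          omega
        rw [hpow]
        field_simp
    rw [hBeq, div_mul_cancel_left₀ hAne]
  rw [show (1 / ∑ k ∈ Finset.Icc 1 N, s k) = (∑ k ∈ Finset.Icc 1 N, s k)⁻¹ from one_div _,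
    tendsto_congr' heq]
  exact hGinv
end
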